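/- Corollary 4.4: For every prime p and every length n, the number of self-dual codes of length n over R = F_p + vF_p equals the square of the number of self-dual codes of length n over F_p; that is, N(R) = N(F_p)², where N(R) is the cardinality of the set of R-submodules C of R^n with C = C^⊥ and N(F_p) is the cardinality of the set of F_p-subspaces D of F_p^n with D = D^⊥. -/

import Mathlib

/-- The Euclidean dual of a linear code. -/
def dualCode {S : Type*} [CommRing S] {ι : Type*} [Fintype ι]
    (C : Submodule S (ι → S)) : Submodule S (ι → S) where
  carrier := {u | ∀ w ∈ C, ∑ i, u i * w i = 0}
  zero_mem' := by intro w hw; simp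
  add_mem' := by
    intro a b ha hb w hw
    simp only [Set.mem_setOf_eq] at ha hb ⊢
    simp only [Pi.add_apply, add_mul, Finset.sum_add_distrib, ha w hw, hb w hw, add_zero]
  smul_mem' := by
    intro c a ha w hw
    simp only [Set.mem_setOf_eq] at ha ⊢
    simp only [Pi.smul_apply, smul_eq_mul, mul_assoc, ← Finset.mul_sum, ha w hw, mul_zero]

/-- The image of an `F_p` vector in `R^n`, `x̂ i = (x i, x i)`. -/
def emb {p n : ℕ} (x : Fin n → ZMod p) : Fin n → ZMod p × ZMod p := fun i => (x i, x i)

/-- `C₁ = {a ∈ F_p^n | a + vb ∈ C for some b}`. -/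
def codeC1 {p n : ℕ} (C : Submodule (ZMod p × ZMod p) (Fin n → ZMod p × ZMod p)) :
    Submodule (ZMod p) (Fin n → ZMod p) where
  carrier := {a | ∃ b : Fin n → ZMod p, (fun i => (a i, a i + b i)) ∈ C}
  zero_mem' := by
    refine ⟨0, ?_⟩
    convert C.zero_mem using 1
    funext i; simp
  add_mem' := by
    rintro a a' ⟨b, hb⟩ ⟨b', hb'⟩
    refine ⟨b + b', ?_⟩
    convert C.add_mem hb hb' using 1
    funext i
    simp [Prod.ext_iff]; ring
  smul_mem' := by
    rintro c a ⟨b, hb⟩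
    refine ⟨c • b, ?_⟩
    convert C.smul_mem ((c, c) : ZMod p × ZMod p) hb using 1
    funext i
    simp [Prod.ext_iff, Prod.smul_def, smul_eq_mul]; ring

/-- `C₂ = {a + b ∈ F_p^n | a + vb ∈ C}`. -/
def codeC2 {p n : ℕ} (C : Submodule (ZMod p × ZMod p) (Fin n → ZMod p × ZMod p)) :
    Submodule (ZMod p) (Fin n → ZMod p) where
  carrier := {s | ∃ a b : Fin n → ZMod p, (fun i => (a i, a i + b i)) ∈ C ∧ s = a + b}
  zero_mem' := by
    refine ⟨0, 0, ?_, by simp⟩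
    convert C.zero_mem using 1
    funext i; simp
  add_mem' := by
    rintro s s' ⟨a, b, hb, rfl⟩ ⟨a', b', hb', rfl⟩
    refine ⟨a + a', b + b', ?_, by abel⟩
    convert C.add_mem hb hb' using 1
    funext i
    simp [Prod.ext_iff]; ring
  smul_mem' := by
    rintro c s ⟨a, b, hb, rfl⟩
    refine ⟨c • a, c • b, ?_, by simp [smul_add]⟩
    convert C.smul_mem ((c, c) : ZMod p × ZMod p) hb using 1
    funext i
    simp [Prod.ext_iff, Prod.smul_def, smul_eq_mul]; ring

namespace SDAux

variable {p n : ℕ}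

/-- First-component projection of an `R`-code. -/
def P1 (C : Submodule (ZMod p × ZMod p) (Fin n → ZMod p × ZMod p)) :
    Submodule (ZMod p) (Fin n → ZMod p) where
  carrier := {x | ∃ u ∈ C, (fun i => (u i).1) = x}
  zero_mem' := ⟨0, C.zero_mem, by funext i; simp⟩
  add_mem' := by
    rintro a b ⟨u, hu, rfl⟩ ⟨v, hv, rfl⟩
    exact ⟨u + v, C.add_mem hu hv, by funext i; simp⟩
  smul_mem' := by
    rintro c a ⟨u, hu, rfl⟩
    refine ⟨((c, 0) : ZMod p × ZMod p) • u, C.smul_mem _ hu, ?_⟩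
    funext i
    simp [smul_eq_mul, Prod.fst_mul]

/-- Second-component projection of an `R`-code. -/
def P2 (C : Submodule (ZMod p × ZMod p) (Fin n → ZMod p × ZMod p)) :
    Submodule (ZMod p) (Fin n → ZMod p) where
  carrier := {x | ∃ u ∈ C, (fun i => (u i).2) = x}
  zero_mem' := ⟨0, C.zero_mem, by funext i; simp⟩
  add_mem' := by
    rintro a b ⟨u, hu, rfl⟩ ⟨v, hv, rfl⟩
    exact ⟨u + v, C.add_mem hu hv, by funext i; simp⟩
  smul_mem' := by
    rintro c a ⟨u, hu, rfl⟩
    refine ⟨((0, c) : ZMod p × ZMod p) • u, C.smul_mem _ hu, ?_⟩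
    funext i
    simp [smul_eq_mul, Prod.snd_mul]

/-- Build an `R`-code from two `F_p`-codes. -/
def build (D1 D2 : Submodule (ZMod p) (Fin n → ZMod p)) :
    Submodule (ZMod p × ZMod p) (Fin n → ZMod p × ZMod p) where
  carrier := {u | (fun i => (u i).1) ∈ D1 ∧ (fun i => (u i).2) ∈ D2}
  zero_mem' := by
    constructor
    · convert D1.zero_mem using 1; rfl
    · convert D2.zero_mem using 1; rfl
  add_mem' := by
    rintro u v ⟨h1, h2⟩ ⟨g1, g2⟩
    constructor
    · convert D1.add_mem h1 g1 using 1; rfl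
    · convert D2.add_mem h2 g2 using 1; rfl
  smul_mem' := by
    rintro ⟨c, d⟩ u ⟨h1, h2⟩
    constructor
    · convert D1.smul_mem c h1 using 1; rfl
    · convert D2.smul_mem d h2 using 1; rfl

lemma P1_build (D1 D2 : Submodule (ZMod p) (Fin n → ZMod p)) : P1 (build D1 D2) = D1 := by
  ext x
  constructor
  · rintro ⟨u, ⟨h1, h2⟩, rfl⟩; exact h1
  · intro hx
    refine ⟨fun i => (x i, 0), ⟨?_, ?_⟩, rfl⟩
    · exact hx
    · convert D2.zero_mem using 1; rfl

lemma P2_build (D1 D2 : Submodule (ZMod p) (Fin n → ZMod p)) : P2 (build D1 D2) = D2 := by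
  ext x
  constructor
  · rintro ⟨u, ⟨h1, h2⟩, rfl⟩; exact h2
  · intro hx
    refine ⟨fun i => (0, x i), ⟨?_, ?_⟩, rfl⟩
    · convert D1.zero_mem using 1; rfl
    · exact hx

lemma build_P (C : Submodule (ZMod p × ZMod p) (Fin n → ZMod p × ZMod p)) :
    build (P1 C) (P2 C) = C := by
  ext u
  constructor
  · rintro ⟨⟨v, hv, hv1⟩, ⟨w, hw, hw2⟩⟩
    have : u = ((1, 0) : ZMod p × ZMod p) • v + ((0, 1) : ZMod p × ZMod p) • w := by
      funext i
      have h1 : (v i).1 = (u i).1 := congrFun hv1 i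
      have h2 : (w i).2 = (u i).2 := congrFun hw2 i
      ext <;> simp [smul_eq_mul, Prod.fst_mul, Prod.snd_mul, h1, h2]
    rw [this]
    exact C.add_mem (C.smul_mem _ hv) (C.smul_mem _ hw)
  · intro hu
    exact ⟨⟨u, hu, rfl⟩, ⟨u, hu, rfl⟩⟩

lemma dual_build (D1 D2 : Submodule (ZMod p) (Fin n → ZMod p)) :
    dualCode (build D1 D2) = build (dualCode D1) (dualCode D2) := by
  ext u
  constructor
  · intro hu
    constructor
    · intro x hx
      have := hu (fun i => (x i, 0)) ⟨hx, by convert D2.zero_mem using 1; rfl⟩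
      have := congrArg Prod.fst this
      simpa [Prod.fst_sum, Prod.snd_sum, Prod.fst_mul, Prod.snd_mul] using this
    · intro x hx
      have := hu (fun i => (0, x i)) ⟨by convert D1.zero_mem using 1; rfl, hx⟩
      have := congrArg Prod.snd this
      simpa [Prod.fst_sum, Prod.snd_sum, Prod.fst_mul, Prod.snd_mul] using this
  · rintro ⟨h1, h2⟩ w ⟨hw1, hw2⟩
    have e1 := h1 _ hw1
    have e2 := h2 _ hw2
    ext
    · simpa [Prod.fst_sum, Prod.fst_mul] using e1
    · simpa [Prod.snd_sum, Prod.snd_mul] using e2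

lemma selfdual_iff (C : Submodule (ZMod p × ZMod p) (Fin n → ZMod p × ZMod p)) :
    C = dualCode C ↔ P1 C = dualCode (P1 C) ∧ P2 C = dualCode (P2 C) := by
  constructor
  · intro h
    have hd : C = build (dualCode (P1 C)) (dualCode (P2 C)) := by
      conv_lhs => rw [h]
      conv_lhs => rw [← build_P C]
      exact dual_build _ _
    constructor
    · conv_lhs => rw [hd]
      rw [P1_build]
    · conv_lhs => rw [hd]
      rw [P2_build]
  · rintro ⟨h1, h2⟩
    conv_lhs => rw [← build_P C, h1, h2]
    rw [← dual_build, build_P]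

def sdEquiv :
    {C : Submodule (ZMod p × ZMod p) (Fin n → ZMod p × ZMod p) // C = dualCode C} ≃
      {D : Submodule (ZMod p) (Fin n → ZMod p) // D = dualCode D} ×
      {D : Submodule (ZMod p) (Fin n → ZMod p) // D = dualCode D} where
  toFun C := ⟨⟨P1 C.1, ((selfdual_iff C.1).mp C.2).1⟩, ⟨P2 C.1, ((selfdual_iff C.1).mp C.2).2⟩⟩
  invFun D := ⟨build D.1.1 D.2.1, by
    rw [dual_build, ← D.1.2, ← D.2.2]⟩
  left_inv C := Subtype.ext (build_P C.1)
  right_inv D := by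
    ext : 2
    · exact P1_build _ _
    · exact P2_build _ _

end SDAux

/-- Corollary 4.4: the number of self-dual codes of length `n` over `R = F_p + vF_p` equals
the square of the number of self-dual codes of length `n` over `F_p`. -/
theorem card_selfDual_codes (p n : ℕ) (hp : p.Prime) :
    Nat.card {C : Submodule (ZMod p × ZMod p) (Fin n → ZMod p × ZMod p) // C = dualCode C} =
      Nat.card {D : Submodule (ZMod p) (Fin n → ZMod p) // D = dualCode D} ^ 2 := by
  rw [Nat.card_congr SDAux.sdEquiv, Nat.card_prod, sq]
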